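/- Let μ be a probability measure on F_p and φ(x) = p·(μ∗μ⁻)(x). Suppose Δ ∈ (0,1/2] satisfies ∑_{ξ,y} |μ̂(ξ)|²|μ̂(yξ)|² μ(y) > Δ ∑_ξ |μ̂(ξ)|², and μ(0) < Δ/4 and ∑_x μ(x)² < Δ/4. Then ∑_{x∈F_p} ∑_{y∈F_p^×} φ(x)φ(xy)μ(y) > (3/4)·Δ·p·φ(0). -/

import Mathlib

open Finset Complex
open scoped Classical BigOperators Pointwise

/-- The additive character `x ↦ e^{2πix/p}` on `ZMod p`. -/
noncomputable def ePsi (p : ℕ) (x : ZMod p) : ℂ :=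
  Complex.exp (2 * Real.pi * Complex.I * (x.val : ℂ) / (p : ℂ))

/-- Fourier transform of a (real) measure on `ZMod p`. -/
noncomputable def ft (p : ℕ) [NeZero p] (μ : ZMod p → ℝ) (ξ : ZMod p) : ℂ :=
  ∑ x : ZMod p, (μ x : ℂ) * ePsi p (x * ξ)

/-- Convolution of two functions on `ZMod p`. -/
noncomputable def cnv (p : ℕ) [NeZero p] (f g : ZMod p → ℝ) (x : ZMod p) : ℝ :=
  ∑ y : ZMod p, f y * g (x - y)

/-- `φ(x) = p · (μ ∗ μ⁻)(x)`. -/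
noncomputable def phiF (p : ℕ) [NeZero p] (μ : ZMod p → ℝ) (x : ZMod p) : ℝ :=
  (p : ℝ) * cnv p μ (fun y => μ (-y)) x

/-- `k`-fold convolution of `f` (0-fold is the Dirac mass at 0). -/
noncomputable def convIter (p : ℕ) [NeZero p] (f : ZMod p → ℝ) : ℕ → ZMod p → ℝ
  | 0 => fun x => if x = 0 then 1 else 0
  | n + 1 => cnv p f (convIter p f n)

/-- `ν_k`, the `k`-fold convolution of `ν = μ ∗ μ⁻`. -/
noncomputable def nuk (p : ℕ) [NeZero p] (μ : ZMod p → ℝ) (k : ℕ) : ZMod p → ℝ :=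
  convIter p (cnv p μ (fun y => μ (-y))) k

/-- `Λ_δ`, the set of large Fourier coefficients. -/
noncomputable def Lam (p : ℕ) [NeZero p] (μ : ZMod p → ℝ) (δ : ℝ) : Finset (ZMod p) :=
  Finset.univ.filter (fun ξ => (p : ℝ) ^ (-δ) < ‖ft p μ ξ‖)

section helpers
variable (p : ℕ) [NeZero p] (μ : ZMod p → ℝ)

lemma ePsi_std (x : ZMod p) : ePsi p x = ZMod.stdAddChar x := by
  rw [ZMod.stdAddChar_apply, ZMod.toCircle_apply, ePsi]

lemma ePsi_add (a b : ZMod p) : ePsi p (a + b) = ePsi p a * ePsi p b := by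
  simp only [ePsi_std]; exact AddChar.map_add_eq_mul _ a b

lemma ePsi_zero : ePsi p 0 = 1 := by
  simp only [ePsi_std]; exact AddChar.map_zero_eq_one _

lemma ePsi_sum (t : ZMod p) :
    ∑ x : ZMod p, ePsi p (x * t) = if t = 0 then (p : ℂ) else 0 := by
  simp only [ePsi_std]
  simpa [ZMod.card] using AddChar.sum_mulShift t (ZMod.isPrimitive_stdAddChar p)

lemma conj_ePsi (t : ZMod p) : (starRingEnd ℂ) (ePsi p t) = ePsi p (-t) := by
  have h1 : ePsi p t * ePsi p (-t) = 1 := by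
    rw [← ePsi_add]; simp [ePsi_zero]
  have hne : ePsi p t ≠ 0 := by rw [ePsi]; exact Complex.exp_ne_zero _
  have h2 : ePsi p t * (starRingEnd ℂ) (ePsi p t) = 1 := by
    rw [ePsi, ← Complex.exp_conj, ← Complex.exp_add]
    rw [show (2 * Real.pi * Complex.I * (t.val : ℂ) / p) +
        (starRingEnd ℂ) (2 * Real.pi * Complex.I * (t.val : ℂ) / p) = 0 by
      simp only [map_div₀, map_mul, Complex.conj_I, Complex.conj_ofReal,
        Complex.conj_natCast, map_ofNat]; ring]
    exact Complex.exp_zero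
  exact mul_left_cancel₀ hne (h2.trans h1.symm)

lemma conj_ft (ξ : ZMod p) : (starRingEnd ℂ) (ft p μ ξ) = ft p μ (-ξ) := by
  rw [ft, ft, map_sum]
  refine Finset.sum_congr rfl fun x _ => ?_
  rw [map_mul, Complex.conj_ofReal, conj_ePsi, mul_neg]

lemma abs_ft_neg (ξ : ZMod p) : ‖ft p μ (-ξ)‖ = ‖ft p μ ξ‖ := by
  rw [← conj_ft]; exact Complex.norm_conj _

lemma sq_abs_ft (ξ : ZMod p) :
    ((‖ft p μ ξ‖ : ℂ)) ^ 2
      = ∑ a : ZMod p, ∑ b : ZMod p, (μ a : ℂ) * (μ b : ℂ) * ePsi p ((a - b) * ξ) := by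
  have : ((‖ft p μ ξ‖ : ℂ)) ^ 2 = ft p μ ξ * (starRingEnd ℂ) (ft p μ ξ) := by
    rw [Complex.mul_conj, ← Complex.sq_norm]
    push_cast
    ring
  rw [this, conj_ft, ft, ft, Finset.sum_mul_sum]
  refine Finset.sum_congr rfl fun a _ => Finset.sum_congr rfl fun b _ => ?_
  rw [mul_mul_mul_comm, ← ePsi_add, show a * ξ + b * -ξ = (a - b) * ξ by ring]

lemma phiF_eq (x : ZMod p) :
    ((phiF p μ x : ℝ) : ℂ)
      = ∑ ξ : ZMod p, ((‖ft p μ ξ‖ : ℂ)) ^ 2 * ePsi p (x * ξ) := by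
  have step : ∀ ξ : ZMod p, ((‖ft p μ ξ‖ : ℂ)) ^ 2 * ePsi p (x * ξ)
      = ∑ a : ZMod p, ∑ b : ZMod p, (μ a : ℂ) * (μ b : ℂ) * ePsi p ((a - b + x) * ξ) := by
    intro ξ
    rw [sq_abs_ft, Finset.sum_mul]
    refine Finset.sum_congr rfl fun a _ => ?_
    rw [Finset.sum_mul]
    refine Finset.sum_congr rfl fun b _ => ?_
    rw [mul_assoc, ← ePsi_add, show (a - b) * ξ + x * ξ = (a - b + x) * ξ by ring]
  calc ((phiF p μ x : ℝ) : ℂ)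
      = ∑ a : ZMod p, (μ a : ℂ) * (μ (a + x) : ℂ) * p := by
        rw [phiF, cnv]
        push_cast
        rw [Finset.mul_sum]
        refine Fintype.sum_equiv (Equiv.subRight x) _ _ fun a => ?_
        simp only [Equiv.subRight_apply]
        rw [show a - x + x = a by ring, show -(x - a) = a - x by ring]
        ring
    _ = ∑ a : ZMod p, ∑ b : ZMod p,
          (μ a : ℂ) * (μ b : ℂ) * (if a - b + x = 0 then (p : ℂ) else 0) := by
        refine Finset.sum_congr rfl fun a _ => ?_
        have hcond : ∀ b : ZMod p, (a - b + x = 0) = (b = a + x) := fun b => by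
          rw [show a - b + x = a + x - b by ring, sub_eq_zero]; exact propext ⟨Eq.symm, Eq.symm⟩
        simp_rw [hcond, mul_ite, mul_zero]
        rw [Finset.sum_ite_eq' Finset.univ (a + x) (fun b => (μ a : ℂ) * (μ b : ℂ) * p)]
        simp
    _ = ∑ a : ZMod p, ∑ b : ZMod p,
          (μ a : ℂ) * (μ b : ℂ) * ∑ ξ : ZMod p, ePsi p (ξ * (a - b + x)) := by
        simp_rw [ePsi_sum]
    _ = ∑ a : ZMod p, ∑ b : ZMod p, ∑ ξ : ZMod p,
          (μ a : ℂ) * (μ b : ℂ) * ePsi p ((a - b + x) * ξ) := by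
        refine Finset.sum_congr rfl fun a _ => Finset.sum_congr rfl fun b _ => ?_
        rw [Finset.mul_sum]
        exact Finset.sum_congr rfl fun ξ _ => by rw [mul_comm ξ]
    _ = ∑ ξ : ZMod p, ∑ a : ZMod p, ∑ b : ZMod p,
          (μ a : ℂ) * (μ b : ℂ) * ePsi p ((a - b + x) * ξ) := by
        rw [show (∑ a : ZMod p, ∑ b : ZMod p, ∑ ξ : ZMod p,
            (μ a : ℂ) * (μ b : ℂ) * ePsi p ((a - b + x) * ξ))
            = ∑ a : ZMod p, ∑ ξ : ZMod p, ∑ b : ZMod p,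
            (μ a : ℂ) * (μ b : ℂ) * ePsi p ((a - b + x) * ξ) from
          Finset.sum_congr rfl fun a _ => Finset.sum_comm]
        exact Finset.sum_comm
    _ = ∑ ξ : ZMod p, ((‖ft p μ ξ‖ : ℂ)) ^ 2 * ePsi p (x * ξ) := by
        exact (Finset.sum_congr rfl fun ξ _ => (step ξ).symm)


lemma sum_phi_mul (y : ZMod p) :
    ∑ x : ZMod p, phiF p μ x * phiF p μ (x * y)
      = p * ∑ ξ : ZMod p, ‖ft p μ ξ‖ ^ 2 * ‖ft p μ (y * ξ)‖ ^ 2 := by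
  have key : ((∑ x : ZMod p, phiF p μ x * phiF p μ (x * y) : ℝ) : ℂ)
      = ((p * ∑ ξ : ZMod p,
          ‖ft p μ ξ‖ ^ 2 * ‖ft p μ (y * ξ)‖ ^ 2 : ℝ) : ℂ) := by
    push_cast
    calc ∑ x : ZMod p, ((phiF p μ x : ℝ) : ℂ) * ((phiF p μ (x * y) : ℝ) : ℂ)
        = ∑ x : ZMod p, (∑ ξ : ZMod p, ((‖ft p μ ξ‖ : ℂ)) ^ 2 * ePsi p (x * ξ)) *
            (∑ η : ZMod p, ((‖ft p μ η‖ : ℂ)) ^ 2 * ePsi p (x * y * η)) := by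
          refine Finset.sum_congr rfl fun x _ => ?_
          rw [phiF_eq, phiF_eq]
      _ = ∑ x : ZMod p, ∑ ξ : ZMod p, ∑ η : ZMod p,
            ((‖ft p μ ξ‖ : ℂ)) ^ 2 * ((‖ft p μ η‖ : ℂ)) ^ 2 *
              ePsi p (x * (ξ + y * η)) := by
          refine Finset.sum_congr rfl fun x _ => ?_
          rw [Finset.sum_mul_sum]
          refine Finset.sum_congr rfl fun ξ _ => Finset.sum_congr rfl fun η _ => ?_
          rw [mul_mul_mul_comm, ← ePsi_add, show x * ξ + x * y * η = x * (ξ + y * η) by ring]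
      _ = ∑ ξ : ZMod p, ∑ η : ZMod p,
            ((‖ft p μ ξ‖ : ℂ)) ^ 2 * ((‖ft p μ η‖ : ℂ)) ^ 2 *
              ∑ x : ZMod p, ePsi p (x * (ξ + y * η)) := by
          rw [Finset.sum_comm]
          refine Finset.sum_congr rfl fun ξ _ => ?_
          rw [Finset.sum_comm]
          refine Finset.sum_congr rfl fun η _ => ?_
          rw [Finset.mul_sum]
      _ = ∑ η : ZMod p, ∑ ξ : ZMod p,
            ((‖ft p μ ξ‖ : ℂ)) ^ 2 * ((‖ft p μ η‖ : ℂ)) ^ 2 *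
              (if ξ = -(y * η) then (p : ℂ) else 0) := by
          rw [Finset.sum_comm]
          refine Finset.sum_congr rfl fun η _ => Finset.sum_congr rfl fun ξ _ => ?_
          rw [ePsi_sum]
          congr 1
          simp [add_eq_zero_iff_eq_neg]
      _ = ∑ η : ZMod p,
            ((‖ft p μ (-(y * η))‖ : ℂ)) ^ 2 * ((‖ft p μ η‖ : ℂ)) ^ 2 *
              (p : ℂ) := by
          refine Finset.sum_congr rfl fun η _ => ?_
          simp_rw [mul_ite, mul_zero]
          rw [Finset.sum_ite_eq' Finset.univ (-(y * η))
            (fun ξ => ((‖ft p μ ξ‖ : ℂ)) ^ 2 *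
              ((‖ft p μ η‖ : ℂ)) ^ 2 * p)]
          simp
      _ = (p : ℂ) * ∑ ξ : ZMod p,
            ((‖ft p μ ξ‖ : ℂ)) ^ 2 * ((‖ft p μ (y * ξ)‖ : ℂ)) ^ 2 := by
          rw [Finset.mul_sum]
          refine Finset.sum_congr rfl fun η _ => ?_
          rw [abs_ft_neg]
          ring
  exact_mod_cast key

lemma plancherel : ∑ ξ : ZMod p, ‖ft p μ ξ‖ ^ 2 = phiF p μ 0 := by
  have key : ((∑ ξ : ZMod p, ‖ft p μ ξ‖ ^ 2 : ℝ) : ℂ) = ((phiF p μ 0 : ℝ) : ℂ) := by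
    push_cast
    rw [phiF_eq]
    refine Finset.sum_congr rfl fun ξ _ => ?_
    rw [mul_comm (0 : ZMod p) ξ, mul_zero, ePsi_zero, mul_one]
  exact_mod_cast key

lemma sum_phiF (hsum : ∑ x : ZMod p, μ x = 1) : ∑ x : ZMod p, phiF p μ x = p := by
  simp only [phiF, cnv]
  rw [← Finset.mul_sum, Finset.sum_comm]
  have h1 : ∀ y : ZMod p, ∑ x : ZMod p, μ y * μ (-(x - y)) = μ y := by
    intro y
    rw [← Finset.mul_sum, show (∑ x : ZMod p, μ (-(x - y))) = 1 from ?_, mul_one]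
    rw [← hsum]
    refine Fintype.sum_equiv (Equiv.subLeft y) _ _ fun x => ?_
    simp [neg_sub]
  simp_rw [h1, hsum, mul_one]

lemma phiF_zero : phiF p μ 0 = p * ∑ y : ZMod p, μ y ^ 2 := by
  simp only [phiF, cnv, zero_sub, neg_neg, sq]

end helpers

theorem stmt2 (p : ℕ) [Fact p.Prime] (μ : ZMod p → ℝ)
    (hpos : ∀ x, 0 ≤ μ x) (hsum : ∑ x : ZMod p, μ x = 1)
    (Δ : ℝ) (hΔ0 : 0 < Δ) (hΔ1 : Δ ≤ 1 / 2)
    (h25 : ∑ ξ : ZMod p, ∑ y : ZMod p,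
        ‖ft p μ ξ‖ ^ 2 * ‖ft p μ (y * ξ)‖ ^ 2 * μ y
      > Δ * ∑ ξ : ZMod p, ‖ft p μ ξ‖ ^ 2)
    (h26a : μ 0 < Δ / 4) (h26b : ∑ x : ZMod p, (μ x) ^ 2 < Δ / 4) :
    ∑ x : ZMod p, ∑ y ∈ Finset.univ.filter (fun y : ZMod p => y ≠ 0),
        phiF p μ x * phiF p μ (x * y) * μ y
      > 3 / 4 * Δ * p * phiF p μ 0 := by
  have hp : (0 : ℝ) < p := by exact_mod_cast (Fact.out : p.Prime).pos
  have hphi0 : 0 < phiF p μ 0 := by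
    rw [phiF_zero]
    have hex : ∃ x : ZMod p, 0 < μ x ^ 2 := by
      by_contra h
      push_neg at h
      have hz : ∀ x : ZMod p, μ x = 0 := fun x => by nlinarith [h x, sq_nonneg (μ x)]
      simp [hz] at hsum
    obtain ⟨x0, hx0⟩ := hex
    have hpos2 : 0 < ∑ y : ZMod p, μ y ^ 2 :=
      Finset.sum_pos' (fun y _ => sq_nonneg _) ⟨x0, Finset.mem_univ _, hx0⟩
    positivity
  have hfilter : ∀ x : ZMod p,
      ∑ y ∈ Finset.univ.filter (fun y : ZMod p => y ≠ 0),
          phiF p μ x * phiF p μ (x * y) * μ y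
        = (∑ y : ZMod p, phiF p μ x * phiF p μ (x * y) * μ y)
            - phiF p μ x * phiF p μ 0 * μ 0 := by
    intro x
    rw [Finset.filter_ne', Finset.sum_erase_eq_sub (Finset.mem_univ 0), mul_zero]
  rw [Finset.sum_congr rfl fun x _ => hfilter x, Finset.sum_sub_distrib]
  have hT2 : ∑ x : ZMod p, phiF p μ x * phiF p μ 0 * μ 0
      = (p : ℝ) * (phiF p μ 0 * μ 0) := by
    simp_rw [mul_assoc]
    rw [← Finset.sum_mul, sum_phiF p μ hsum]
  have hT1 : ∑ x : ZMod p, ∑ y : ZMod p, phiF p μ x * phiF p μ (x * y) * μ y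
      = (p : ℝ) * ∑ ξ : ZMod p, ∑ y : ZMod p,
          ‖ft p μ ξ‖ ^ 2 * ‖ft p μ (y * ξ)‖ ^ 2 * μ y := by
    rw [Finset.sum_comm]
    calc ∑ y : ZMod p, ∑ x : ZMod p, phiF p μ x * phiF p μ (x * y) * μ y
        = ∑ y : ZMod p, (∑ x : ZMod p, phiF p μ x * phiF p μ (x * y)) * μ y := by
          exact Finset.sum_congr rfl fun y _ => by rw [Finset.sum_mul]
      _ = ∑ y : ZMod p, ((p : ℝ) * ∑ ξ : ZMod p,
            ‖ft p μ ξ‖ ^ 2 * ‖ft p μ (y * ξ)‖ ^ 2) * μ y := by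
          exact Finset.sum_congr rfl fun y _ => by rw [sum_phi_mul]
      _ = (p : ℝ) * ∑ y : ZMod p, ∑ ξ : ZMod p,
            ‖ft p μ ξ‖ ^ 2 * ‖ft p μ (y * ξ)‖ ^ 2 * μ y := by
          rw [Finset.mul_sum]
          exact Finset.sum_congr rfl fun y _ => by rw [mul_assoc, Finset.sum_mul]
      _ = (p : ℝ) * ∑ ξ : ZMod p, ∑ y : ZMod p,
            ‖ft p μ ξ‖ ^ 2 * ‖ft p μ (y * ξ)‖ ^ 2 * μ y := by
          rw [Finset.sum_comm]
  rw [hT1, hT2]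
  have h1 : (p : ℝ) * ∑ ξ : ZMod p, ∑ y : ZMod p,
        ‖ft p μ ξ‖ ^ 2 * ‖ft p μ (y * ξ)‖ ^ 2 * μ y
      > (p : ℝ) * (Δ * ∑ ξ : ZMod p, ‖ft p μ ξ‖ ^ 2) :=
    mul_lt_mul_of_pos_left h25 hp
  rw [plancherel] at h1
  have h2 : (p : ℝ) * (phiF p μ 0 * μ 0) < (p : ℝ) * (phiF p μ 0 * (Δ / 4)) :=
    mul_lt_mul_of_pos_left (mul_lt_mul_of_pos_left h26a hphi0) hp
  nlinarith [h1, h2, hphi0, hp]
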